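/- Let T be a tournament on n = 4k vertices. Then the arrow-simplicity of T satisfies s(T) ≤ 2k - 2. -/

import Mathlib

open Finset

/-- A tournament on vertex set `V`: an orientation of the complete graph.
`r x y` means `x` dominates `y` (the arc `(x,y)` is present). -/
structure Tournament (V : Type*) where
  r : V → V → Bool
  irrefl : ∀ x, r x x = false
  total : ∀ x y, x ≠ y → r x y = !r y x

variable {V : Type*}

/-- Out-neighborhood `v(x)`. -/
def Tournament.outSet [Fintype V] (T : Tournament V) (x : V) : Finset V :=
  univ.filter fun y => T.r x y = true

/-- In-neighborhood `f(x)`. -/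
def Tournament.inSet [Fintype V] (T : Tournament V) (x : V) : Finset V :=
  univ.filter fun y => T.r y x = true

/-- Out-degree `d⁺(x)`. -/
def Tournament.outDeg [Fintype V] (T : Tournament V) (x : V) : ℕ :=
  (T.outSet x).card

/-- In-degree `d⁻(x)`. -/
def Tournament.inDeg [Fintype V] (T : Tournament V) (x : V) : ℕ :=
  (T.inSet x).card

/-- Number of separators `Δ(x,y) = |v(x)∩f(y)| + |f(x)∩v(y)|`. -/
def Tournament.sep [Fintype V] [DecidableEq V] (T : Tournament V) (x y : V) : ℕ :=
  (T.outSet x ∩ T.inSet y).card + (T.inSet x ∩ T.outSet y).card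

/-- `I` is a module of `T` if every vertex outside `I` relates uniformly to `I`. -/
def Tournament.IsModule [Fintype V] (T : Tournament V) (I : Finset V) : Prop :=
  ∀ x ∉ I, (∀ y ∈ I, T.r x y = true) ∨ (∀ y ∈ I, T.r y x = true)

/-- A tournament is simple if all its modules are trivial. -/
def Tournament.IsSimple [Fintype V] (T : Tournament V) : Prop :=
  ∀ I : Finset V, T.IsModule I → I.card ≤ 1 ∨ I = univ

/-- The number of arcs of `T` that are reversed in `T'`. -/
def Tournament.dist [Fintype V] (T T' : Tournament V) : ℕ :=
  (univ.filter fun p : V × V => T.r p.1 p.2 = true ∧ T'.r p.1 p.2 = false).card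

/-- Arrow-simplicity: the least number of arcs whose reversal yields a
non-simple tournament. -/
noncomputable def Tournament.simplicity [Fintype V] (T : Tournament V) : ℕ :=
  sInf {m : ℕ | ∃ T' : Tournament V, ¬ T'.IsSimple ∧ T.dist T' = m}

/-- Subtournament induced on a finset of vertices. -/
def Tournament.sub (T : Tournament V) (s : Finset V) : Tournament {x // x ∈ s} where
  r a b := T.r a b
  irrefl a := T.irrefl a
  total a b h := T.total a b fun e => h (Subtype.ext e)

/-- The relation obtained from `T` by reversing the orientation between `x` and `y`
whenever `g x y` holds. -/
def Tournament.flipRel (T : Tournament V) (g : V → V → Bool) (x y : V) : Bool :=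
  if g x y = true then !T.r x y else T.r x y


set_option linter.unusedSectionVars false

namespace Tournament
variable {V : Type*} [Fintype V] [DecidableEq V]

lemma not_rel (T : Tournament V) {x y : V} (h : x ≠ y) (hr : T.r x y = true) :
    T.r y x = false := by
  have := T.total x y h
  rw [hr] at this
  cases hyx : T.r y x <;> simp [hyx] at this ⊢

lemma rel_of_not (T : Tournament V) {x y : V} (h : x ≠ y) (hr : T.r x y = false) :
    T.r y x = true := by
  have := T.total x y h
  rw [hr] at this
  cases hyx : T.r y x <;> simp [hyx] at this ⊢

/-- Flip all edges between `w` and members of `E`. -/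
def flipStar (T : Tournament V) (w : V) (E : Finset V) (hw : w ∉ E) : Tournament V where
  r a b := if (a = w ∧ b ∈ E) ∨ (b = w ∧ a ∈ E) then !T.r a b else T.r a b
  irrefl x := by
    by_cases hx : x = w
    · subst hx; simp [hw, T.irrefl]
    · simp [hx, T.irrefl]
  total x y h := by
    rw [T.total x y h]
    by_cases hg : (y = w ∧ x ∈ E) ∨ (x = w ∧ y ∈ E)
    · rw [if_pos (Or.symm hg), if_pos hg]
    · rw [if_neg (fun hc => hg (Or.symm hc)), if_neg hg]

lemma flipStar_r (T : Tournament V) (w : V) (E : Finset V) (hw : w ∉ E) (a b : V) :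
    (T.flipStar w E hw).r a b
      = if (a = w ∧ b ∈ E) ∨ (b = w ∧ a ∈ E) then !T.r a b else T.r a b := rfl

lemma dist_flipStar (T : Tournament V) (w : V) (E : Finset V) (hw : w ∉ E) :
    T.dist (T.flipStar w E hw) = E.card := by
  have hset : (univ.filter fun p : V × V =>
        T.r p.1 p.2 = true ∧ (T.flipStar w E hw).r p.1 p.2 = false)
      = E.image (fun z => if T.r z w = true then (z, w) else (w, z)) := by
    ext p
    obtain ⟨a, b⟩ := p
    simp only [mem_filter, mem_univ, true_and, mem_image]
    simp only [flipStar_r]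
    constructor
    · rintro ⟨hr, hr'⟩
      by_cases hg : (a = w ∧ b ∈ E) ∨ (b = w ∧ a ∈ E)
      · rcases hg with ⟨ha, hb⟩ | ⟨hb, ha⟩
        · have hab : a ≠ b := fun hc => hw (ha ▸ hc ▸ hb)
          have hbw : T.r b w = false := by rw [← ha]; exact T.not_rel hab hr
          exact ⟨b, hb, by rw [if_neg (by simp [hbw]), ha]⟩
        · exact ⟨a, ha, by rw [if_pos (hb ▸ hr), hb]⟩
      · rw [if_neg hg, hr] at hr'
        exact absurd hr' (by simp)
    · rintro ⟨z, hz, hp⟩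
      have hzw : z ≠ w := fun hc => hw (hc ▸ hz)
      by_cases hr : T.r z w = true
      · rw [if_pos hr] at hp
        injection hp with e1 e2
        subst e1; subst e2
        refine ⟨hr, ?_⟩
        rw [if_pos (Or.inr ⟨rfl, hz⟩), hr]
        rfl
      · rw [if_neg hr] at hp
        injection hp with e1 e2
        subst e1; subst e2
        refine ⟨T.rel_of_not hzw (by simpa using hr), ?_⟩
        rw [if_pos (Or.inl ⟨rfl, hz⟩), T.rel_of_not hzw (by simpa using hr)]
        rfl
  rw [Tournament.dist, hset, Finset.card_image_of_injOn]
  intro z hz z' hz' hzz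
  have h1 : z ≠ w := fun hc => hw (hc ▸ hz)
  have h2 : z' ≠ w := fun hc => hw (hc ▸ hz')
  by_cases hr : T.r z w = true <;> by_cases hr' : T.r z' w = true <;>
    simp [hr, hr', Prod.ext_iff] at hzz <;> tauto

lemma outDeg_add_inDeg (T : Tournament V) (x : V) :
    T.outDeg x + T.inDeg x = Fintype.card V - 1 := by
  have hdisj : Disjoint (T.outSet x) (T.inSet x) := by
    rw [Finset.disjoint_left]
    intro z hz hz'
    simp only [outSet, inSet, mem_filter, mem_univ, true_and] at hz hz'
    have hzx : x ≠ z := by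
      intro hc; rw [← hc, T.irrefl] at hz; exact absurd hz (by simp)
    have := T.not_rel hzx hz
    rw [hz'] at this; exact absurd this (by simp)
  have hunion : T.outSet x ∪ T.inSet x = univ.erase x := by
    ext z
    simp only [outSet, inSet, mem_union, mem_filter, mem_univ, true_and, mem_erase, and_true]
    constructor
    · rintro (hr | hr) <;> intro hc
      · rw [hc, T.irrefl] at hr; exact absurd hr (by simp)
      · rw [hc, T.irrefl] at hr; exact absurd hr (by simp)
    · intro hzx
      cases hr : T.r x z
      · exact Or.inr (T.rel_of_not (fun hc => hzx hc.symm) hr)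
      · exact Or.inl rfl
  rw [outDeg, inDeg, ← Finset.card_union_of_disjoint hdisj, hunion,
    Finset.card_erase_of_mem (mem_univ x), card_univ]

lemma sum_outDeg (T : Tournament V) : ∑ z, T.outDeg z = ∑ z, T.inDeg z := by
  have h1 : ∀ z : V, T.outDeg z = ∑ w, (if T.r z w = true then 1 else 0) := by
    intro z; rw [outDeg, outSet]; exact Finset.card_filter _ _
  have h2 : ∀ z : V, T.inDeg z = ∑ w, (if T.r w z = true then 1 else 0) := by
    intro z; rw [inDeg, inSet]; exact Finset.card_filter _ _
  simp_rw [h1, h2]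
  exact Finset.sum_comm

lemma card_out_in (T : Tournament V) (x y : V) :
    (T.outSet x ∩ T.inSet y).card
      = ∑ z, (if T.r x z = true then 1 else 0) * (if T.r z y = true then 1 else 0) := by
  rw [outSet, inSet, ← Finset.filter_and, Finset.card_filter]
  refine Finset.sum_congr rfl fun z _ => ?_
  by_cases h1 : T.r x z = true <;> by_cases h2 : T.r z y = true <;> simp [h1, h2]

lemma card_in_out (T : Tournament V) (x y : V) :
    (T.inSet x ∩ T.outSet y).card
      = ∑ z, (if T.r z x = true then 1 else 0) * (if T.r y z = true then 1 else 0) := by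
  rw [inSet, outSet, ← Finset.filter_and, Finset.card_filter]
  refine Finset.sum_congr rfl fun z _ => ?_
  by_cases h1 : T.r z x = true <;> by_cases h2 : T.r y z = true <;> simp [h1, h2]

lemma sum_sep (T : Tournament V) :
    ∑ x, ∑ y, T.sep x y = 2 * ∑ z, T.outDeg z * T.inDeg z := by
  have key : ∀ f g : V → V → ℕ,
      ∑ x, ∑ y, ∑ z, f x z * g z y = ∑ z, (∑ x, f x z) * (∑ y, g z y) := by
    intro f g
    have h1 : ∀ x : V, ∑ y, ∑ z, f x z * g z y = ∑ z, ∑ y, f x z * g z y := by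
      intro x; exact Finset.sum_comm
    simp_rw [h1]
    rw [Finset.sum_comm]
    refine Finset.sum_congr rfl fun z _ => ?_
    rw [Finset.sum_mul]
    refine Finset.sum_congr rfl fun x _ => ?_
    rw [Finset.mul_sum]
  have hin : ∀ z : V, ∑ x, (if T.r x z = true then 1 else 0) = T.inDeg z := by
    intro z; rw [inDeg, inSet]; exact (Finset.card_filter _ _).symm
  have hout : ∀ z : V, ∑ y, (if T.r z y = true then 1 else 0) = T.outDeg z := by
    intro z; rw [outDeg, outSet]; exact (Finset.card_filter _ _).symm
  simp_rw [sep, card_out_in, card_in_out, Finset.sum_add_distrib]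
  rw [key, key]
  simp_rw [hin, hout]
  rw [two_mul]
  congr 1
  exact Finset.sum_congr rfl fun z _ => mul_comm _ _

lemma sep_parity (T : Tournament V) {x y : V} (h : x ≠ y) :
    ((T.sep x y : ℕ) : ZMod 2) = ((T.outDeg x + T.outDeg y + 1 : ℕ) : ZMod 2) := by
  have hsep : T.sep x y = ∑ z, ((if T.r x z = true ∧ T.r z y = true then 1 else 0)
      + (if T.r z x = true ∧ T.r y z = true then 1 else 0)) := by
    simp only [sep, outSet, inSet, ← Finset.filter_and]
    rw [Finset.card_filter, Finset.card_filter, Finset.sum_add_distrib]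
  have hdx : T.outDeg x = ∑ z, (if T.r x z = true then 1 else 0) := by
    rw [outDeg, outSet]; exact Finset.card_filter _ _
  have hdy : T.outDeg y = ∑ z, (if T.r y z = true then 1 else 0) := by
    rw [outDeg, outSet]; exact Finset.card_filter _ _
  have key : ∑ z, (((if T.r x z = true ∧ T.r z y = true then (1 : ZMod 2) else 0)
      + (if T.r z x = true ∧ T.r y z = true then (1 : ZMod 2) else 0))
      + ((if T.r x z = true then (1 : ZMod 2) else 0)
      + (if T.r y z = true then (1 : ZMod 2) else 0))) = 1 := by
    rw [← Finset.sum_subset (Finset.subset_univ ({x, y} : Finset V))]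
    · rw [Finset.sum_pair h]
      have hxy2 : T.r y x = !T.r x y := T.total y x (Ne.symm h)
      cases hxy : T.r x y <;>
        simp only [T.irrefl, hxy, hxy2, Bool.not_true, Bool.not_false,
          false_and, and_false, true_and, and_true, if_false, if_true,
          Bool.false_eq_true, Bool.true_eq_false] <;> decide
    · intro z _ hz
      simp only [mem_insert, mem_singleton] at hz
      push_neg at hz
      have h1 : T.r z x = !T.r x z := T.total z x hz.1
      have h2 : T.r z y = !T.r y z := T.total z y hz.2
      cases hxz : T.r x z <;> cases hyz : T.r y z <;>
        simp only [h1, h2, hxz, hyz, Bool.not_true, Bool.not_false,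
          false_and, and_false, true_and, and_true, if_false, if_true,
          Bool.false_eq_true, Bool.true_eq_false] <;> decide
  rw [Finset.sum_add_distrib, Finset.sum_add_distrib, Finset.sum_add_distrib] at key
  have claim : ∀ a b c d : ZMod 2, (a + b) + (c + d) = 1 → a + b = c + d + 1 := by decide
  rw [hsep, hdx, hdy]
  push_cast
  rw [Finset.sum_add_distrib]
  exact claim _ _ _ _ key

lemma sep_even (T : Tournament V) {x y : V} (h : x ≠ y)
    (hpar : 2 ∣ (T.outDeg x + T.outDeg y + 1)) : 2 ∣ T.sep x y := by
  rw [← ZMod.natCast_eq_zero_iff] at hpar ⊢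
  rw [T.sep_parity h, hpar]

lemma not_simple_of (T' : Tournament V) (I : Finset V) (hmod : T'.IsModule I)
    (h2 : 2 ≤ I.card) (hne : I ≠ univ) : ¬ T'.IsSimple := by
  intro hs
  rcases hs I hmod with h | h
  · omega
  · exact hne h

lemma simplicity_le (T T' : Tournament V) (h : ¬ T'.IsSimple) :
    T.simplicity ≤ T.dist T' := Nat.sInf_le ⟨T', h, rfl⟩

lemma isModule_erase_out (T : Tournament V) (w : V) (hw : w ∉ T.outSet w) :
    (T.flipStar w (T.outSet w) hw).IsModule (univ.erase w) := by
  intro a ha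
  have haw : a = w := by
    by_contra hc
    exact ha (mem_erase.mpr ⟨hc, mem_univ a⟩)
  right
  rw [haw]
  intro y hy
  have hyw : y ≠ w := (mem_erase.mp hy).1
  rw [flipStar_r]
  by_cases hE : y ∈ T.outSet w
  · rw [if_pos (Or.inr ⟨rfl, hE⟩)]
    simp only [outSet, mem_filter, mem_univ, true_and] at hE
    rw [T.not_rel (Ne.symm hyw) hE]
    rfl
  · rw [if_neg (by rintro (⟨h1, _⟩ | ⟨_, h2⟩); exacts [hyw h1, hE h2])]
    simp only [outSet, mem_filter, mem_univ, true_and, Bool.not_eq_true] at hE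
    exact T.rel_of_not (Ne.symm hyw) hE

lemma isModule_erase_in (T : Tournament V) (w : V) (hw : w ∉ T.inSet w) :
    (T.flipStar w (T.inSet w) hw).IsModule (univ.erase w) := by
  intro a ha
  have haw : a = w := by
    by_contra hc
    exact ha (mem_erase.mpr ⟨hc, mem_univ a⟩)
  left
  rw [haw]
  intro y hy
  have hyw : y ≠ w := (mem_erase.mp hy).1
  rw [flipStar_r]
  by_cases hE : y ∈ T.inSet w
  · rw [if_pos (Or.inl ⟨rfl, hE⟩)]
    simp only [inSet, mem_filter, mem_univ, true_and] at hE
    rw [T.not_rel hyw hE]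
    rfl
  · rw [if_neg (by rintro (⟨_, h1⟩ | ⟨h2, _⟩); exacts [hE h1, hyw h2])]
    simp only [inSet, mem_filter, mem_univ, true_and, Bool.not_eq_true] at hE
    exact T.rel_of_not hyw hE

/-- The set of separators of the pair `{x, y}`. -/
def sepSet (T : Tournament V) (x y : V) : Finset V :=
  (T.outSet x ∩ T.inSet y) ∪ (T.inSet x ∩ T.outSet y)

lemma card_sepSet (T : Tournament V) (x y : V) : (T.sepSet x y).card = T.sep x y := by
  rw [sepSet, Finset.card_union_of_disjoint, sep]
  rw [Finset.disjoint_left]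
  intro z hz hz'
  simp only [mem_inter, outSet, inSet, mem_filter, mem_univ, true_and] at hz hz'
  have hzx : x ≠ z := by
    intro hc; rw [← hc, T.irrefl] at hz; exact absurd hz.1 (by simp)
  have := T.not_rel hzx hz.1
  rw [hz'.1] at this
  exact absurd this (by simp)

lemma y_not_mem_sepSet (T : Tournament V) (x y : V) : y ∉ T.sepSet x y := by
  simp [sepSet, outSet, inSet, T.irrefl]

lemma isModule_pair (T : Tournament V) {x y : V} (hxy : x ≠ y)
    (hy : y ∉ T.sepSet x y) :
    (T.flipStar y (T.sepSet x y) hy).IsModule ({x, y} : Finset V) := by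
  intro z hz
  simp only [mem_insert, mem_singleton] at hz
  push_neg at hz
  obtain ⟨hzx, hzy⟩ := hz
  have hrx : (T.flipStar y (T.sepSet x y) hy).r z x = T.r z x := by
    rw [flipStar_r, if_neg]
    rintro (⟨h1, _⟩ | ⟨h1, _⟩)
    · exact hzy h1
    · exact hxy h1
  have hxr : (T.flipStar y (T.sepSet x y) hy).r x z = T.r x z := by
    rw [flipStar_r, if_neg]
    rintro (⟨h1, _⟩ | ⟨h1, _⟩)
    · exact hxy h1
    · exact hzy h1
  have hry : (T.flipStar y (T.sepSet x y) hy).r z y = T.r z x := by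
    rw [flipStar_r]
    by_cases hzE : z ∈ T.sepSet x y
    · rw [if_pos (Or.inr ⟨rfl, hzE⟩)]
      simp only [sepSet, mem_union, mem_inter, outSet, inSet, mem_filter,
        mem_univ, true_and] at hzE
      rcases hzE with ⟨h1, h2⟩ | ⟨h1, h2⟩
      · rw [h2, T.not_rel (Ne.symm hzx) h1]
        rfl
      · rw [T.not_rel (Ne.symm hzy) h2, h1]
        rfl
    · rw [if_neg (by rintro (⟨h1, _⟩ | ⟨_, h2⟩); exacts [hzy h1, hzE h2])]
      cases hA : T.r z x <;> cases hB : T.r z y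
      · rfl
      · exfalso
        apply hzE
        simp only [sepSet, mem_union, mem_inter, outSet, inSet, mem_filter,
          mem_univ, true_and]
        exact Or.inl ⟨T.rel_of_not hzx hA, hB⟩
      · exfalso
        apply hzE
        simp only [sepSet, mem_union, mem_inter, outSet, inSet, mem_filter,
          mem_univ, true_and]
        exact Or.inr ⟨hA, T.rel_of_not hzy hB⟩
      · rfl
  cases hzx2 : T.r z x
  · right
    intro u hu
    simp only [mem_insert, mem_singleton] at hu
    rcases hu with rfl | rfl
    · rw [hxr]
      exact T.rel_of_not hzx hzx2
    · have htot := (T.flipStar u (T.sepSet x u) hy).total u z (Ne.symm hzy)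
      rw [htot, hry, hzx2]
      rfl
  · left
    intro u hu
    simp only [mem_insert, mem_singleton] at hu
    rcases hu with rfl | rfl
    · rw [hrx]
      exact hzx2
    · rw [hry]
      exact hzx2

lemma exists_good_pair (T : Tournament V) (k : ℕ) (hk : 1 ≤ k)
    (hcard : Fintype.card V = 4 * k)
    (hreg : ∀ z : V, T.outDeg z = 2 * k - 1 ∨ T.outDeg z = 2 * k) :
    ∃ x y : V, x ≠ y ∧ T.sep x y ≤ 2 * k - 2 := by
  by_contra hcon
  push_neg at hcon
  obtain ⟨m, hm⟩ : ∃ m : ℕ, m + 1 = 2 * k := ⟨2 * k - 1, by omega⟩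
  have hreg' : ∀ z : V, T.outDeg z = m ∨ T.outDeg z = m + 1 := by
    intro z; rcases hreg z with h | h
    · left; omega
    · right; omega
  have hsep : ∀ x y : V, x ≠ y → m ≤ T.sep x y := by
    intro x y hxy
    have := hcon x y hxy
    omega
  have hio : ∀ z : V, T.outDeg z + T.inDeg z = 2 * m + 1 := by
    intro z
    have := T.outDeg_add_inDeg z
    rw [hcard] at this
    omega
  have hprod : ∀ z : V, T.outDeg z * T.inDeg z = m * (m + 1) := by
    intro z
    have h2 := hio z
    rcases hreg' z with h | h
    · have h3 : T.inDeg z = m + 1 := by omega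
      rw [h, h3]
    · have h3 : T.inDeg z = m := by omega
      rw [h, h3, mul_comm]
  classical
  set A := univ.filter (fun z : V => T.outDeg z = m) with hAdef
  set B := univ.filter (fun z : V => T.outDeg z = m + 1) with hBdef
  have hdisjAB : Disjoint A B := by
    rw [Finset.disjoint_left]
    intro z hz hz'
    rw [hAdef, mem_filter] at hz
    rw [hBdef, mem_filter] at hz'
    omega
  have hunionAB : A ∪ B = univ := by
    ext z
    simp only [hAdef, hBdef, mem_union, mem_filter, mem_univ, true_and, iff_true]
    exact hreg' z
  have hABcard : A.card + B.card = 4 * k := by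
    rw [← Finset.card_union_of_disjoint hdisjAB, hunionAB, card_univ, hcard]
  have hsum_out : ∑ z, T.outDeg z = 2 * k * (2 * m + 1) := by
    have h1 : ∑ z : V, (T.outDeg z + T.inDeg z) = 4 * k * (2 * m + 1) := by
      rw [Finset.sum_congr rfl (fun z _ => hio z), Finset.sum_const, card_univ,
        hcard, smul_eq_mul]
    rw [Finset.sum_add_distrib, ← T.sum_outDeg] at h1
    have e : 4 * k * (2 * m + 1) = 2 * k * (2 * m + 1) + 2 * k * (2 * m + 1) := by ring
    omega
  have hsumA : ∑ z ∈ A, T.outDeg z = m * A.card := by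
    rw [Finset.sum_congr rfl (fun z hz => (Finset.mem_filter.mp hz).2),
      Finset.sum_const, smul_eq_mul, mul_comm]
  have hsumB : ∑ z ∈ B, T.outDeg z = (m + 1) * B.card := by
    rw [Finset.sum_congr rfl (fun z hz => (Finset.mem_filter.mp hz).2),
      Finset.sum_const, smul_eq_mul, mul_comm]
  have hsplit : m * A.card + (m + 1) * B.card = 2 * k * (2 * m + 1) := by
    rw [← hsumA, ← hsumB, ← Finset.sum_union hdisjAB, hunionAB, hsum_out]
  have hBcard : B.card = m + 1 := by
    have e2 : 2 * k * (2 * m + 1) = m * (A.card + B.card) + 2 * k := by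
      rw [hABcard]; ring
    have e3 : m * A.card + (m + 1) * B.card = m * (A.card + B.card) + B.card := by ring
    rw [e3, e2] at hsplit
    omega
  have hAcard : A.card = m + 1 := by omega
  have hS : ∑ x, ∑ y, T.sep x y = (4 * m + 4) * (m * (m + 1)) := by
    rw [T.sum_sep, Finset.sum_congr rfl (fun z _ => hprod z), Finset.sum_const,
      card_univ, hcard, smul_eq_mul]
    have : 4 * k = 2 * m + 2 := by omega
    rw [this]
    ring
  have hmixed : ∀ x ∈ A, ∀ y ∈ B, m + 1 ≤ T.sep x y := by
    intro x hx y hyB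
    rw [hAdef, mem_filter] at hx
    rw [hBdef, mem_filter] at hyB
    have hxy : x ≠ y := by
      intro hc
      rw [hc] at hx
      omega
    have heven : 2 ∣ T.sep x y := T.sep_even hxy (by rw [hx.2, hyB.2]; omega)
    have h1 := hsep x y hxy
    have hmodd : m % 2 = 1 := by omega
    omega
  have hmixed' : ∀ x ∈ B, ∀ y ∈ A, m + 1 ≤ T.sep x y := by
    intro x hx y hyA
    rw [hBdef, mem_filter] at hx
    rw [hAdef, mem_filter] at hyA
    have hxy : x ≠ y := by
      intro hc
      rw [hc] at hx
      omega
    have heven : 2 ∣ T.sep x y := T.sep_even hxy (by rw [hx.2, hyA.2]; omega)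
    have h1 := hsep x y hxy
    have hmodd : m % 2 = 1 := by omega
    omega
  have same_bound : ∀ (C : Finset V), C.card = m + 1 → ∀ x ∈ C,
      m * m ≤ ∑ y ∈ C, T.sep x y := by
    intro C hC x hx
    have h1 : ∑ y ∈ C.erase x, T.sep x y ≤ ∑ y ∈ C, T.sep x y :=
      Finset.sum_le_sum_of_subset (Finset.erase_subset x C)
    have h2 : m * m ≤ ∑ y ∈ C.erase x, T.sep x y := by
      calc m * m = ∑ _y ∈ C.erase x, m := by
            rw [Finset.sum_const, smul_eq_mul, Finset.card_erase_of_mem hx, hC]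
            simp
        _ ≤ _ := Finset.sum_le_sum fun y hy =>
            hsep x y (Ne.symm (Finset.ne_of_mem_erase hy))
    exact le_trans h2 h1
  have mixed_bound : ∀ (C D : Finset V), D.card = m + 1 →
      (∀ x ∈ C, ∀ y ∈ D, m + 1 ≤ T.sep x y) → ∀ x ∈ C,
      (m + 1) * (m + 1) ≤ ∑ y ∈ D, T.sep x y := by
    intro C D hD hCD x hx
    calc (m + 1) * (m + 1) = ∑ _y ∈ D, (m + 1) := by
          rw [Finset.sum_const, smul_eq_mul, hD, mul_comm]
      _ ≤ _ := Finset.sum_le_sum fun y hy => hCD x hx y hy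
  have hinner_total : ∀ x : V,
      ∑ y ∈ A, T.sep x y + ∑ y ∈ B, T.sep x y ≤ ∑ y, T.sep x y := by
    intro x
    rw [← Finset.sum_union hdisjAB]
    exact Finset.sum_le_sum_of_subset (Finset.subset_univ _)
  have hxA : ∀ x ∈ A, m * m + (m + 1) * (m + 1) ≤ ∑ y, T.sep x y := by
    intro x hx
    have h0 := hinner_total x
    have h1 := same_bound A hAcard x hx
    have h2 := mixed_bound A B hBcard hmixed x hx
    omega
  have hxB : ∀ x ∈ B, m * m + (m + 1) * (m + 1) ≤ ∑ y, T.sep x y := by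
    intro x hx
    have h0 := hinner_total x
    have h1 := same_bound B hBcard x hx
    have h2 := mixed_bound B A hAcard hmixed' x hx
    omega
  have hfinal : (2 * m + 2) * (m * m + (m + 1) * (m + 1)) ≤ ∑ x, ∑ y, T.sep x y := by
    have t1 : ∑ x ∈ A, (m * m + (m + 1) * (m + 1)) ≤ ∑ x ∈ A, ∑ y, T.sep x y :=
      Finset.sum_le_sum hxA
    have t2 : ∑ x ∈ B, (m * m + (m + 1) * (m + 1)) ≤ ∑ x ∈ B, ∑ y, T.sep x y :=
      Finset.sum_le_sum hxB
    rw [Finset.sum_const, hAcard, smul_eq_mul] at t1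
    rw [Finset.sum_const, hBcard, smul_eq_mul] at t2
    have t3 : ∑ x ∈ A, ∑ y, T.sep x y + ∑ x ∈ B, ∑ y, T.sep x y
        ≤ ∑ x, ∑ y, T.sep x y := by
      rw [← Finset.sum_union hdisjAB]
      exact Finset.sum_le_sum_of_subset (Finset.subset_univ _)
    calc (2 * m + 2) * (m * m + (m + 1) * (m + 1))
        = (m + 1) * (m * m + (m + 1) * (m + 1))
          + (m + 1) * (m * m + (m + 1) * (m + 1)) := by ring
      _ ≤ ∑ x ∈ A, ∑ y, T.sep x y + ∑ x ∈ B, ∑ y, T.sep x y := by omega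
      _ ≤ ∑ x, ∑ y, T.sep x y := t3
  rw [hS] at hfinal
  nlinarith [hfinal]

end Tournament

theorem stmt_18_aux {V : Type*} [Fintype V] [DecidableEq V] (k : ℕ) (T : Tournament V)
    (hcard : Fintype.card V = 4 * k) :
    T.simplicity ≤ 2 * k - 2 := by
  rcases Nat.eq_zero_or_pos k with hk0 | hk
  · subst hk0
    have hvcard : Fintype.card V = 0 := by simpa using hcard
    have hempty : {m : ℕ | ∃ T' : Tournament V, ¬ T'.IsSimple ∧ T.dist T' = m} = ∅ := by
      ext n
      simp only [Set.mem_setOf_eq, Set.mem_empty_iff_false, iff_false, not_exists]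
      rintro T' ⟨hT', _⟩
      apply hT'
      intro I _
      left
      have h1 : I.card ≤ Fintype.card V := Finset.card_le_univ I
      omega
    rw [Tournament.simplicity, hempty, Nat.sInf_empty]
  · by_cases hA : ∃ w : V, T.outDeg w ≤ 2 * k - 2 ∨ T.inDeg w ≤ 2 * k - 2
    · obtain ⟨w, hw⟩ := hA
      have hbig : 4 ≤ Fintype.card V := by omega
      have hcardmod : 2 ≤ (univ.erase w).card := by
        rw [Finset.card_erase_of_mem (mem_univ w), card_univ]
        omega
      have hnuniv : (univ.erase w : Finset V) ≠ univ := by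
        intro hc
        have h1 : w ∉ univ.erase w := Finset.notMem_erase w univ
        rw [hc] at h1
        exact h1 (mem_univ w)
      rcases hw with hw | hw
      · have hwE : w ∉ T.outSet w := by
          simp [Tournament.outSet, T.irrefl]
        have hns : ¬ (T.flipStar w (T.outSet w) hwE).IsSimple :=
          Tournament.not_simple_of _ (univ.erase w) (T.isModule_erase_out w hwE)
            hcardmod hnuniv
        calc T.simplicity ≤ T.dist (T.flipStar w (T.outSet w) hwE) :=
              T.simplicity_le _ hns
          _ = (T.outSet w).card := T.dist_flipStar w (T.outSet w) hwE
          _ ≤ 2 * k - 2 := hw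
      · have hwE : w ∉ T.inSet w := by
          simp [Tournament.inSet, T.irrefl]
        have hns : ¬ (T.flipStar w (T.inSet w) hwE).IsSimple :=
          Tournament.not_simple_of _ (univ.erase w) (T.isModule_erase_in w hwE)
            hcardmod hnuniv
        calc T.simplicity ≤ T.dist (T.flipStar w (T.inSet w) hwE) :=
              T.simplicity_le _ hns
          _ = (T.inSet w).card := T.dist_flipStar w (T.inSet w) hwE
          _ ≤ 2 * k - 2 := hw
    · push_neg at hA
      have hreg : ∀ z : V, T.outDeg z = 2 * k - 1 ∨ T.outDeg z = 2 * k := by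
        intro z
        have h1 := (hA z).1
        have h2 := (hA z).2
        have h3 := T.outDeg_add_inDeg z
        rw [hcard] at h3
        omega
      obtain ⟨x, y, hxy, hsepxy⟩ := T.exists_good_pair k hk hcard hreg
      have hyS : y ∉ T.sepSet x y := T.y_not_mem_sepSet x y
      have hns : ¬ (T.flipStar y (T.sepSet x y) hyS).IsSimple := by
        refine Tournament.not_simple_of _ {x, y} (T.isModule_pair hxy hyS) ?_ ?_
        · rw [Finset.card_pair hxy]
        · intro hc
          have h1 : ({x, y} : Finset V).card = Fintype.card V := by
            rw [hc, card_univ]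
          rw [Finset.card_pair hxy, hcard] at h1
          omega
      calc T.simplicity ≤ T.dist (T.flipStar y (T.sepSet x y) hyS) :=
            T.simplicity_le _ hns
        _ = (T.sepSet x y).card := T.dist_flipStar y (T.sepSet x y) hyS
        _ = T.sep x y := T.card_sepSet x y
        _ ≤ 2 * k - 2 := hsepxy

/-- If `n = 4k` then `s(T) ≤ 2k - 2`. -/
theorem stmt_18 {V : Type*} [Fintype V] [DecidableEq V] (k : ℕ) (T : Tournament V)
    (hcard : Fintype.card V = 4 * k) :
    T.simplicity ≤ 2 * k - 2 := by
  exact stmt_18_aux k T hcard
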